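/- Let β₁, β₂, γ₁, γ₂, μ, θ_{v2}, α_{v2} > 0, K = α_{v2}θ_{v2}/(θ_{v2}+μ), R₁^{wv} = β₁/(γ₁+μ) > 1, R₂^{wv} = β₂/(γ₂+μ) < 1, and suppose K > 1/R₂^{wv}. Set v₁* = 1 − 1/R₁^{wv} and v₂* = (1/R₂^{wv} − 1)/(K−1). Then there exists v ∈ (0,1) with both R₁ = R₁^{wv}(1−v) < 1 and R₂ = R₂^{wv}[1+v(K−1)] < 1 if and only if v₁* < v₂*, which is equivalent to α_{v2} < (1 + μ/θ_{v2})·(1 + (1/R₂^{wv} − 1)/(1 − 1/R₁^{wv})). -/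

import Mathlib

theorem vaccination_window_iff
    (β1 β2 γ1 γ2 μ θv2 αv2 : ℝ)
    (hβ1 : 0 < β1) (hβ2 : 0 < β2) (hγ1 : 0 < γ1) (hγ2 : 0 < γ2)
    (hμ : 0 < μ) (hθ : 0 < θv2) (hαv2 : 0 < αv2)
    (K R1wv R2wv : ℝ)
    (hK : K = αv2 * θv2 / (θv2 + μ))
    (hR1wv : R1wv = β1 / (γ1 + μ)) (hR1wv1 : 1 < R1wv)
    (hR2wv : R2wv = β2 / (γ2 + μ)) (hR2wv1 : R2wv < 1)
    (hKbig : 1 / R2wv < K)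
    (v1s v2s : ℝ)
    (hv1s : v1s = 1 - 1 / R1wv) (hv2s : v2s = (1 / R2wv - 1) / (K - 1)) :
    ((∃ v : ℝ, 0 < v ∧ v < 1 ∧ R1wv * (1 - v) < 1 ∧ R2wv * (1 + v * (K - 1)) < 1) ↔
      v1s < v2s) ∧
    (v1s < v2s ↔ αv2 < (1 + μ / θv2) * (1 + (1 / R2wv - 1) / (1 - 1 / R1wv))) := by
  have hR1pos : 0 < R1wv := lt_trans one_pos hR1wv1
  have hR2pos : 0 < R2wv := by rw [hR2wv]; positivity
  have h1R2 : 1 < 1 / R2wv := one_lt_one_div hR2pos hR2wv1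
  have hK1 : 1 < K := lt_trans h1R2 hKbig
  have hKm : 0 < K - 1 := by linarith
  have hinvR1 : 1 / R1wv < 1 := by rw [div_lt_one hR1pos]; linarith
  have hinvR1pos : 0 < 1 / R1wv := by positivity
  have hv1s0 : 0 < v1s := by rw [hv1s]; linarith
  have hv2s1 : v2s < 1 := by rw [hv2s, div_lt_one hKm]; linarith
  have hR1inv : R1wv * (1 / R1wv) = 1 := mul_one_div_cancel hR1pos.ne'
  have hR2inv : R2wv * (1 / R2wv) = 1 := mul_one_div_cancel hR2pos.ne'
  constructor
  · constructor
    · rintro ⟨v, hv0, hv1, h1, h2⟩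
      have hA : 1 - v < 1 / R1wv := by
        rw [lt_div_iff₀ hR1pos]; nlinarith
      have hB : v * (K - 1) < 1 / R2wv - 1 := by
        nlinarith [hR2inv, hR2pos]
      have h1' : v1s < v := by rw [hv1s]; linarith [hA]
      have h2' : v < v2s := by rw [hv2s, lt_div_iff₀ hKm]; exact hB
      linarith
    · intro h
      refine ⟨(v1s + v2s) / 2, by linarith, by linarith, ?_, ?_⟩
      · nlinarith [hR1inv]
      · have hv : (v1s + v2s) / 2 < v2s := by linarith
        have hv2sK : v2s * (K - 1) = 1 / R2wv - 1 := by
          rw [hv2s]; field_simp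
        have : (v1s + v2s) / 2 * (K - 1) < 1 / R2wv - 1 := by nlinarith
        nlinarith [hR2inv]
  · have ha : 0 < 1 - 1 / R1wv := by linarith
    have hm : 0 < 1 + μ / θv2 := by positivity
    have hαK : αv2 = K * (1 + μ / θv2) := by
      rw [hK]; field_simp
    have key : K < 1 + (1 / R2wv - 1) / (1 - 1 / R1wv) ↔
        (1 - 1 / R1wv) * (K - 1) < 1 / R2wv - 1 := by
      rw [← sub_lt_iff_lt_add', lt_div_iff₀ ha, mul_comm]
    rw [hv1s, hv2s, lt_div_iff₀ hKm, hαK, mul_comm (1 + μ / θv2), mul_lt_mul_iff_left₀ hm]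
    exact key.symm
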